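/- For every n ≥ 2, the probability p_n that two independent uniformly random binary characters on an n-element set are compatible satisfies p_n ≤ 4·(3/4)^n. -/
import Mathlib


open Finset
open scoped Classical

/-- The set of taxa whose state differs from that of the reference taxon `x0`. -/
noncomputable def Aset {n : ℕ} (x0 : Fin n) (χ : Fin n → Bool) : Finset (Fin n) :=
  Finset.univ.filter fun x => χ x ≠ χ x0

/-- Two binary characters are compatible if their `Aset`s are disjoint or nested. -/
def Compat {n : ℕ} (x0 : Fin n) (χ₁ χ₂ : Fin n → Bool) : Prop :=
  Disjoint (Aset x0 χ₁) (Aset x0 χ₂) ∨ Aset x0 χ₁ ⊆ Aset x0 χ₂ ∨ Aset x0 χ₂ ⊆ Aset x0 χ₁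

lemma bool_beq_cancel : ∀ a a' c : Bool, (a == c) = (a' == c) → a = a' := by decide

noncomputable def Sv {n : ℕ} (x0 : Fin n) (v : Bool × Bool) :
    Finset ((Fin n → Bool) × (Fin n → Bool)) :=
  Finset.univ.filter fun p => ∀ x, (p.1 x == p.1 x0, p.2 x == p.2 x0) ≠ v

lemma card_Sv {n : ℕ} (x0 : Fin n) (v : Bool × Bool) :
    (Sv x0 v).card ≤ 4 * 3 ^ (n - 1) := by
  classical
  have hne : (!v.1, v.2) ≠ v := by
    intro h
    have := congrArg Prod.fst h
    simp at this
  set T := Bool × Bool × ({x : Fin n // x ≠ x0} → {u : Bool × Bool // u ≠ v}) with hT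
  have hcard : Fintype.card T = 4 * 3 ^ (n - 1) := by
    have h1 : Fintype.card {u : Bool × Bool // u ≠ v} = 3 := by
      have := Fintype.card_subtype_compl (fun u : Bool × Bool => u = v)
      simp [Fintype.card_subtype_eq] at this
      simpa using this
    have h2 : Fintype.card {x : Fin n // x ≠ x0} = n - 1 := by
      have := Fintype.card_subtype_compl (fun x : Fin n => x = x0)
      simp [Fintype.card_subtype_eq] at this
      simpa using this
    simp [hT, Fintype.card_prod, Fintype.card_fun, h1, h2]
    ring
  have key : (Sv x0 v).card ≤ (Finset.univ : Finset T).card := by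
    apply Finset.card_le_card_of_injOn
      (f := fun p => (p.1 x0, p.2 x0, fun x : {x : Fin n // x ≠ x0} =>
        if h : (p.1 x.1 == p.1 x0, p.2 x.1 == p.2 x0) = v then (⟨(!v.1, v.2), hne⟩ : {u : Bool × Bool // u ≠ v})
        else ⟨_, h⟩))
    · intro p hp; exact Finset.mem_univ _
    · intro p hp q hq hfq
      simp only [Sv, Finset.mem_coe, Finset.mem_filter, Finset.mem_univ, true_and] at hp hq
      simp only [Prod.mk.injEq] at hfq
      obtain ⟨h1, h2, h3⟩ := hfq
      ext x
      · by_cases hx : x = x0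
        · rw [hx]; exact h1
        · have hx' := congrFun h3 ⟨x, hx⟩
          rw [dif_neg (hp x), dif_neg (hq x)] at hx'
          have := congrArg (fun u => u.1.1) hx'
          dsimp only at this
          rw [h1] at this
          exact bool_beq_cancel _ _ _ this
      · by_cases hx : x = x0
        · rw [hx]; exact h2
        · have hx' := congrFun h3 ⟨x, hx⟩
          rw [dif_neg (hp x), dif_neg (hq x)] at hx'
          have := congrArg (fun u => u.1.2) hx'
          dsimp only at this
          rw [h2] at this
          exact bool_beq_cancel _ _ _ this
  calc (Sv x0 v).card ≤ _ := key
    _ = 4 * 3 ^ (n-1) := by rw [Finset.card_univ, hcard]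

lemma mem_Aset {n : ℕ} (x0 : Fin n) (χ : Fin n → Bool) (x : Fin n) :
    x ∈ Aset x0 χ ↔ χ x ≠ χ x0 := by simp [Aset]

/-- For every n ≥ 2 the probability that two independent uniformly random binary
characters on an n-element set are compatible is at most 4(3/4)^n. -/
theorem stmt3 (n : ℕ) (hn : 2 ≤ n) (x0 : Fin n) :
    ((Finset.univ.filter fun p : (Fin n → Bool) × (Fin n → Bool) =>
        Compat x0 p.1 p.2).card : ℝ) / 4 ^ n
      ≤ 4 * (3 / 4 : ℝ) ^ n := by
  classical
  have hsub : (Finset.univ.filter fun p : (Fin n → Bool) × (Fin n → Bool) => Compat x0 p.1 p.2)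
      ⊆ Sv x0 (false, false) ∪ Sv x0 (false, true) ∪ Sv x0 (true, false) := by
    intro p hp
    simp only [Finset.mem_filter, Finset.mem_univ, true_and] at hp
    simp only [Finset.mem_union, Sv, Finset.mem_filter, Finset.mem_univ, true_and]
    rcases hp with h | h | h
    · left; left
      intro x hx
      simp only [Prod.mk.injEq, beq_eq_false_iff_ne, ne_eq] at hx
      rw [Finset.disjoint_left] at h
      exact h ((mem_Aset x0 p.1 x).2 hx.1) ((mem_Aset x0 p.2 x).2 hx.2)
    · left; right
      intro x hx
      simp only [Prod.mk.injEq, beq_eq_false_iff_ne, beq_iff_eq, ne_eq] at hx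
      exact (mem_Aset x0 p.2 x).1 (h ((mem_Aset x0 p.1 x).2 hx.1)) hx.2
    · right
      intro x hx
      simp only [Prod.mk.injEq, beq_eq_false_iff_ne, beq_iff_eq, ne_eq] at hx
      exact (mem_Aset x0 p.1 x).1 (h ((mem_Aset x0 p.2 x).2 hx.2)) hx.1
  have hcard : (Finset.univ.filter fun p : (Fin n → Bool) × (Fin n → Bool) =>
      Compat x0 p.1 p.2).card ≤ 4 * 3 ^ n := by
    calc _ ≤ (Sv x0 (false, false) ∪ Sv x0 (false, true) ∪ Sv x0 (true, false)).card :=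
        Finset.card_le_card hsub
      _ ≤ (Sv x0 (false, false) ∪ Sv x0 (false, true)).card + (Sv x0 (true, false)).card :=
        Finset.card_union_le _ _
      _ ≤ (Sv x0 (false, false)).card + (Sv x0 (false, true)).card + (Sv x0 (true, false)).card :=
        by gcongr; exact Finset.card_union_le _ _
      _ ≤ 4 * 3 ^ (n-1) + 4 * 3 ^ (n-1) + 4 * 3 ^ (n-1) := by
        gcongr <;> exact card_Sv x0 _
      _ = 12 * 3 ^ (n-1) := by ring
      _ = 4 * 3 ^ n := by
        obtain ⟨m, rfl⟩ : ∃ m, n = m + 1 := ⟨n - 1, by omega⟩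
        simp [pow_succ]; ring
  have h4 : (0:ℝ) < 4 ^ n := by positivity
  rw [div_le_iff₀ h4]
  calc ((Finset.univ.filter fun p : (Fin n → Bool) × (Fin n → Bool) =>
        Compat x0 p.1 p.2).card : ℝ) ≤ ((4 * 3 ^ n : ℕ) : ℝ) := by exact_mod_cast hcard
    _ = 4 * (3:ℝ) ^ n := by push_cast; ring
    _ = 4 * (3/4:ℝ) ^ n * 4 ^ n := by
      rw [div_pow]; field_simp
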